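/- arXiv:1310.5292 — 2 statements merged into one kernel-verified Lean document; each statement's English description precedes it below -/
import Mathlib

section
/- Let G be a connected graph on n ≥ 2 vertices. For real α, with M = max_i 𝔻_i, N = max_{i≠j} d_{ij}𝔻_jᵅ/𝔻_iᵅ, and (^α 𝕄)_i + 𝔻_i ordered nonincreasingly, one has for each 1 ≤ i ≤ n: ρ(𝔻ℚ(G)) ≤ ((^α 𝕄)_i + 𝔻_i + M − N + √(((^α 𝕄)_i + 𝔻_i − M + N)² + 4N·Σ_{k=1}^{i−1}((^α 𝕄)_k + 𝔻_k − (^α 𝕄)_i − 𝔻_i)))/2. -/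
open Matrix Finset Real

/-- Spectral radius: largest modulus of a complex eigenvalue (root of the
characteristic polynomial). -/
noncomputable def specRad {n : ℕ} (A : Matrix (Fin n) (Fin n) ℝ) : ℝ :=
  (((A.map (Complex.ofReal)).charpoly.roots).map (fun z => ‖z‖)).foldr max 0

/-- Irreducibility of a nonnegative matrix. -/
def Irred {n : ℕ} (A : Matrix (Fin n) (Fin n) ℝ) : Prop :=
  ∀ i j : Fin n, ∃ k : ℕ, 0 < (A ^ k) i j

open Polynomial in
lemma foldr_max_le (c : ℝ) (hc : 0 ≤ c) (s : Multiset ℝ) (h : ∀ x ∈ s, x ≤ c) :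
    s.foldr max 0 ≤ c := by
  induction s using Multiset.induction_on with
  | empty => simpa using hc
  | cons a s ih =>
    rw [Multiset.foldr_cons]
    exact max_le (h a (Multiset.mem_cons_self a s)) (ih fun x hx => h x (Multiset.mem_cons_of_mem hx))

lemma exists_eigenvec {n : ℕ} (B : Matrix (Fin n) (Fin n) ℂ) {z : ℂ}
    (hz : z ∈ B.charpoly.roots) : ∃ v : Fin n → ℂ, v ≠ 0 ∧ B.mulVec v = z • v := by
  have hroot : B.charpoly.IsRoot z := (Polynomial.mem_roots'.1 hz).2
  have hdet : ((B.charmatrix).map (Polynomial.evalRingHom z)).det = 0 := by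
    have h2 := RingHom.map_det (Polynomial.evalRingHom z) B.charmatrix
    have h3 : (Polynomial.evalRingHom z) B.charmatrix.det = 0 := by
      simpa [Matrix.charpoly] using hroot
    rw [h2] at h3
    simpa [RingHom.mapMatrix_apply] using h3
  have hMz : (B.charmatrix).map (Polynomial.evalRingHom z) = z • (1 : Matrix (Fin n) (Fin n) ℂ) - B := by
    ext p k
    by_cases h : p = k
    · subst h; simp [Matrix.charmatrix_apply_eq, Matrix.one_apply]
    · simp [Matrix.charmatrix_apply_ne _ _ _ h, Matrix.one_apply, h]
  rw [hMz] at hdet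
  obtain ⟨v, hv, hv0⟩ := (Matrix.exists_mulVec_eq_zero_iff).2 hdet
  refine ⟨v, hv, ?_⟩
  rw [Matrix.sub_mulVec, Matrix.smul_mulVec, Matrix.one_mulVec, sub_eq_zero] at hv0
  exact hv0.symm

lemma specRad_le_of_rowsums {n : ℕ} (hn : 0 < n) (A : Matrix (Fin n) (Fin n) ℝ)
    (hA : ∀ p k, 0 ≤ A p k) (e : Fin n → ℝ) (he : ∀ k, 0 < e k) (lam : ℝ) (hlam : 0 ≤ lam)
    (hrow : ∀ p, ∑ k, A p k * e k ≤ lam * e p) : specRad A ≤ lam := by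
  apply foldr_max_le lam hlam
  intro x hx
  obtain ⟨z, hz, rfl⟩ := Multiset.mem_map.1 hx
  obtain ⟨v, hv, hveq⟩ := exists_eigenvec _ hz
  haveI : NeZero n := ⟨hn.ne'⟩
  obtain ⟨p, -, hp⟩ := Finset.exists_max_image Finset.univ (fun k => ‖v k‖ / e k)
    ⟨0, Finset.mem_univ 0⟩
  set m := ‖v p‖ / e p with hm
  have hvk : ∀ k, ‖v k‖ ≤ m * e k := by
    intro k
    have := hp k (Finset.mem_univ k)
    exact (div_le_iff₀ (he k)).1 this
  have hmpos : 0 < m := by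
    obtain ⟨q, hq⟩ := Function.ne_iff.1 hv
    have h1 : 0 < ‖v q‖ / e q :=
      div_pos (by simpa using hq) (he q)
    exact lt_of_lt_of_le h1 (hp q (Finset.mem_univ q))
  have hvp : ‖v p‖ = m * e p := by
    rw [hm, div_mul_cancel₀ _ (he p).ne']
  have heig : ∑ k, ((A.map Complex.ofReal) p k) * v k = z * v p := by
    have := congrFun hveq p
    simpa [Matrix.mulVec, dotProduct] using this
  have hstep : ‖z * v p‖ ≤ ∑ k, A p k * ‖v k‖ := by
    rw [← heig]
    refine le_trans (norm_sum_le _ _) ?_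
    refine Finset.sum_le_sum fun k _ => ?_
    rw [norm_mul]
    simp [Matrix.map_apply, Complex.norm_real, abs_of_nonneg (hA p k)]
  have hstep2 : ∑ k, A p k * ‖v k‖ ≤ m * ∑ k, A p k * e k := by
    rw [Finset.mul_sum]
    refine Finset.sum_le_sum fun k _ => ?_
    calc A p k * ‖v k‖ ≤ A p k * (m * e k) :=
          mul_le_mul_of_nonneg_left (hvk k) (hA p k)
      _ = m * (A p k * e k) := by ring
  have hfin : ‖z‖ * (m * e p) ≤ lam * (m * e p) := by
    have h1 : ‖z * v p‖ = ‖z‖ * (m * e p) := by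
      rw [norm_mul, hvp]
    have h2 : m * ∑ k, A p k * e k ≤ m * (lam * e p) :=
      mul_le_mul_of_nonneg_left (hrow p) hmpos.le
    calc ‖z‖ * (m * e p) = ‖z * v p‖ := h1.symm
      _ ≤ ∑ k, A p k * ‖v k‖ := hstep
      _ ≤ m * ∑ k, A p k * e k := hstep2
      _ ≤ m * (lam * e p) := h2
      _ = lam * (m * e p) := by ring
  exact le_of_mul_le_mul_right hfin (by exact mul_pos hmpos (he p))

set_option maxHeartbeats 2000000 in
theorem stmt_18 {n : ℕ} (hn : 2 ≤ n) (G : SimpleGraph (Fin n)) (hconn : G.Connected)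
    (α : ℝ) (D : Fin n → ℝ) (hD : ∀ i, D i = ∑ j, (G.dist i j : ℝ))
    (𝕄 : Fin n → ℝ)
    (h𝕄 : ∀ i, 𝕄 i = (∑ j, (G.dist i j : ℝ) * (D j) ^ α) / (D i) ^ α)
    (hord : ∀ i j : Fin n, i ≤ j → 𝕄 j + D j ≤ 𝕄 i + D i)
    (M : ℝ) (hM : IsGreatest {x | ∃ i, x = D i} M)
    (N : ℝ)
    (hN : IsGreatest {x | ∃ i j : Fin n, i ≠ j ∧ x = (G.dist i j : ℝ) * (D j) ^ α / (D i) ^ α} N) :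
    ∀ i : Fin n,
      specRad (Matrix.diagonal D + Matrix.of fun i j : Fin n => (G.dist i j : ℝ)) ≤
        (𝕄 i + D i + M - N +
          Real.sqrt ((𝕄 i + D i - M + N) ^ 2 +
            4 * N * ∑ k ∈ Finset.Iio i, (𝕄 k + D k - 𝕄 i - D i))) / 2 := by
  intro i
  classical
  haveI : Nontrivial (Fin n) := Fin.nontrivial_iff_two_le.mpr hn
  set d : Fin n → Fin n → ℝ := fun p k => (G.dist p k : ℝ) with hd
  have hd0 : ∀ p k, 0 ≤ d p k := fun p k => Nat.cast_nonneg _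
  have hdself : ∀ p, d p p = 0 := by intro p; simp [hd]
  have hD1 : ∀ p, 1 ≤ D p := by
    intro p
    obtain ⟨q, hq⟩ : ∃ q : Fin n, q ≠ p := exists_ne p
    have h1 : 1 ≤ (G.dist p q : ℝ) := by
      have := hconn.pos_dist_of_ne (Ne.symm hq)
      exact_mod_cast this
    rw [hD p]
    calc (1:ℝ) ≤ (G.dist p q : ℝ) := h1
      _ ≤ ∑ j, (G.dist p j : ℝ) :=
          Finset.single_le_sum (f := fun j => (G.dist p j : ℝ)) (fun j _ => by positivity)
            (Finset.mem_univ q)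
  have hDpos : ∀ p, 0 < D p := fun p => lt_of_lt_of_le one_pos (hD1 p)
  set w : Fin n → ℝ := fun k => D k ^ α with hw
  have hwpos : ∀ k, 0 < w k := fun k => Real.rpow_pos_of_pos (hDpos k) α
  set s : Fin n → ℝ := fun k => 𝕄 k + D k with hs
  have hords : ∀ p q : Fin n, p ≤ q → s q ≤ s p := hord
  set T : ℝ := ∑ k ∈ Finset.Iio i, (s k - s i) with hT
  have hTeq : ∑ k ∈ Finset.Iio i, (𝕄 k + D k - 𝕄 i - D i) = T := by
    rw [hT]
    apply Finset.sum_congr rfl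
    intro k _
    simp only [hs]
    ring
  have hT0 : 0 ≤ T := by
    rw [hT]
    apply Finset.sum_nonneg
    intro k hk
    have hki : k ≤ i := le_of_lt (Finset.mem_Iio.1 hk)
    have := hords k i hki
    linarith
  have hMub : ∀ p, D p ≤ M := fun p => hM.2 ⟨p, rfl⟩
  have hNub : ∀ p k : Fin n, p ≠ k → d p k * w k ≤ N * w p := by
    intro p k hpk
    have h1 : d p k * w k / w p ≤ N := hN.2 ⟨p, k, hpk, rfl⟩
    calc d p k * w k = (d p k * w k / w p) * w p := by
          rw [div_mul_cancel₀ _ (hwpos p).ne']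
      _ ≤ N * w p := mul_le_mul_of_nonneg_right h1 (hwpos p).le
  have hN0 : 0 < N := by
    obtain ⟨q, hq⟩ : ∃ q : Fin n, q ≠ (⟨0, by omega⟩ : Fin n) := exists_ne _
    set p0 : Fin n := ⟨0, by omega⟩
    have hmem : d q p0 * w p0 / w q ∈ {x | ∃ i j : Fin n, i ≠ j ∧
        x = (G.dist i j : ℝ) * (D j) ^ α / (D i) ^ α} := ⟨q, p0, hq, rfl⟩
    have h1 : d q p0 * w p0 / w q ≤ N := hN.2 hmem
    have hdq : 0 < d q p0 := by
      have h0 : 0 < G.dist q p0 := hconn.pos_dist_of_ne hq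
      simp only [hd]
      exact_mod_cast h0
    have : 0 < d q p0 * w p0 / w q := div_pos (mul_pos hdq (hwpos p0)) (hwpos q)
    linarith
  have h𝕄sum : ∀ p, ∑ k, d p k * w k = 𝕄 p * w p := by
    intro p
    have hwp : w p = D p ^ α := by rw [hw]
    rw [h𝕄 p, hwp, div_mul_cancel₀ _ (by rw [← hwp]; exact (hwpos p).ne')]
  have h𝕄0 : ∀ p, 0 ≤ 𝕄 p := by
    intro p
    rw [h𝕄 p]
    apply div_nonneg _ (Real.rpow_nonneg (hDpos p).le α)
    exact Finset.sum_nonneg fun k _ =>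
      mul_nonneg (Nat.cast_nonneg _) (Real.rpow_nonneg (hDpos k).le α)
  have hsipos : 0 < s i := by have := h𝕄0 i; have := hDpos i; simp [hs]; linarith
  -- key lemma
  have key : ∀ lam : ℝ, s i ≤ lam → M - N < lam → N * T ≤ (lam - M + N) * (lam - s i) →
      specRad (Matrix.diagonal D + Matrix.of fun i j : Fin n => (G.dist i j : ℝ)) ≤ lam := by
    intro lam h1 h2 h3
    set γ : ℝ := lam - M + N with hγdef
    have hγ : 0 < γ := by simp [hγdef]; linarith
    set t : Fin n → ℝ := fun k => γ + (if k < i then s k - s i else 0) with ht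
    have htpos : ∀ k, 0 < t k := by
      intro k
      rw [ht]
      dsimp only
      split
      · rename_i hk
        have := hords k i (le_of_lt hk)
        linarith
      · simpa using hγ
    have htγ : ∀ k, ¬ k < i → t k = γ := by intro k hk; simp [ht, hk]
    refine specRad_le_of_rowsums (by omega) _ ?_ (fun k => w k * t k)
      (fun k => mul_pos (hwpos k) (htpos k)) lam (by linarith) ?_
    · intro p k
      simp only [Matrix.add_apply, Matrix.of_apply, Matrix.diagonal_apply]
      have := (hDpos p).le
      split
      · rename_i h; subst h; positivity
      · positivity
    intro p
    beta_reduce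
    have hentry : ∀ k, (Matrix.diagonal D + Matrix.of fun i j : Fin n => (G.dist i j : ℝ)) p k
        = (if p = k then D p else 0) + d p k := by
      intro k
      simp [Matrix.add_apply, Matrix.diagonal_apply, hd]
    have hsplit : ∑ k, (Matrix.diagonal D + Matrix.of fun i j : Fin n => (G.dist i j : ℝ)) p k *
        (w k * t k) = D p * (w p * t p) + ∑ k, d p k * (w k * t k) := by
      calc ∑ k, (Matrix.diagonal D + Matrix.of fun i j : Fin n => (G.dist i j : ℝ)) p k *
            (w k * t k)
          = ∑ k, ((if p = k then D p * (w k * t k) else 0) + d p k * (w k * t k)) := by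
            apply Finset.sum_congr rfl
            intro k _
            rw [hentry k]
            split <;> ring
        _ = (∑ k, if p = k then D p * (w k * t k) else 0) + ∑ k, d p k * (w k * t k) :=
            Finset.sum_add_distrib
        _ = D p * (w p * t p) + ∑ k, d p k * (w k * t k) := by
            rw [Finset.sum_ite_eq Finset.univ p (fun k => D p * (w k * t k)),
              if_pos (Finset.mem_univ p)]
    rw [hsplit]
    have hcore : ∑ k, d p k * (w k * t k) ≤ (lam - D p) * (w p * t p) := by
      have hsum1 : ∑ k, d p k * (w k * t k)
          = γ * (𝕄 p * w p) + ∑ k ∈ Finset.Iio i, d p k * w k * (s k - s i) := by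
        calc ∑ k, d p k * (w k * t k)
            = ∑ k, (γ * (d p k * w k) + (if k < i then d p k * w k * (s k - s i) else 0)) := by
              apply Finset.sum_congr rfl
              intro k _
              rw [ht]
              dsimp only
              split <;> ring
          _ = γ * ∑ k, d p k * w k + ∑ k, (if k < i then d p k * w k * (s k - s i) else 0) := by
              rw [Finset.sum_add_distrib, Finset.mul_sum]
          _ = γ * (𝕄 p * w p) + ∑ k ∈ Finset.Iio i, d p k * w k * (s k - s i) := by
              rw [h𝕄sum p]
              congr 1
              rw [← Finset.sum_subset (Finset.subset_univ (Finset.Iio i))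
                (fun k _ hk => if_neg (by simpa [Finset.mem_Iio] using hk))]
              apply Finset.sum_congr rfl
              intro k hk
              rw [if_pos (Finset.mem_Iio.1 hk)]
      by_cases hpi : p < i
      · have hpmem : p ∈ Finset.Iio i := Finset.mem_Iio.2 hpi
        have hu : 0 ≤ s p - s i := by
          have := hords p i (le_of_lt hpi); linarith
        have hBd : ∑ k ∈ Finset.Iio i, d p k * w k * (s k - s i)
            ≤ N * w p * (T - (s p - s i)) := by
          have e1 : ∑ k ∈ (Finset.Iio i).erase p, d p k * w k * (s k - s i)
              = ∑ k ∈ Finset.Iio i, d p k * w k * (s k - s i) :=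
            Finset.sum_erase _ (by rw [hdself]; ring)
          have e2 : ∑ k ∈ (Finset.Iio i).erase p, d p k * w k * (s k - s i)
              ≤ ∑ k ∈ (Finset.Iio i).erase p, N * w p * (s k - s i) := by
            apply Finset.sum_le_sum
            intro k hk
            have hkp : k ≠ p := Finset.ne_of_mem_erase hk
            have hki : k ∈ Finset.Iio i := Finset.mem_of_mem_erase hk
            have hsk : 0 ≤ s k - s i := by
              have := hords k i (le_of_lt (Finset.mem_Iio.1 hki)); linarith
            exact mul_le_mul_of_nonneg_right (hNub p k (Ne.symm hkp)) hsk
          have e3 : ∑ k ∈ (Finset.Iio i).erase p, N * w p * (s k - s i)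
              = N * w p * (T - (s p - s i)) := by
            rw [← Finset.mul_sum, Finset.sum_erase_eq_sub hpmem, hT]
          linarith
        have htp : t p = γ + (s p - s i) := by simp [ht, hpi]
        rw [hsum1, htp, hγdef]
        have hsp' : s p = 𝕄 p + D p := by rw [hs]
        have hsi'' : s i = 𝕄 i + D i := by rw [hs]
        rw [hsp', hsi''] at hBd ⊢
        have hA1 : w p * (N * T) ≤ w p * ((lam - M + N) * (lam - s i)) :=
          mul_le_mul_of_nonneg_left h3 (hwpos p).le
        rw [hsi''] at hA1
        have hA2 : 0 ≤ (w p * (𝕄 p + D p - (𝕄 i + D i))) * (M - D p) := by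
          rw [hsp', hsi''] at hu
          exact mul_nonneg (mul_nonneg (hwpos p).le hu) (sub_nonneg.2 (hMub p))
        nlinarith [hBd, hA1, hA2]
      · have hip : i ≤ p := not_lt.1 hpi
        have hsp : s p ≤ s i := hords i p hip
        have htp : t p = γ := htγ p hpi
        have hBd : ∑ k ∈ Finset.Iio i, d p k * w k * (s k - s i) ≤ N * w p * T := by
          calc ∑ k ∈ Finset.Iio i, d p k * w k * (s k - s i)
              ≤ ∑ k ∈ Finset.Iio i, N * w p * (s k - s i) := by
                apply Finset.sum_le_sum
                intro k hk
                have hki : k < i := Finset.mem_Iio.1 hk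
                have hkp : p ≠ k := (lt_of_lt_of_le hki hip).ne'
                have hsk : 0 ≤ s k - s i := by
                  have := hords k i (le_of_lt hki); linarith
                exact mul_le_mul_of_nonneg_right (hNub p k hkp) hsk
            _ = N * w p * T := by rw [← Finset.mul_sum, hT]
        rw [hsum1, htp, hγdef]
        have hsp' : s p = 𝕄 p + D p := by rw [hs]
        have hsi'' : s i = 𝕄 i + D i := by rw [hs]
        have hA1 : w p * (N * T) ≤ w p * ((lam - M + N) * (lam - s i)) :=
          mul_le_mul_of_nonneg_left h3 (hwpos p).le
        rw [hsi''] at hA1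
        have hA3 : 0 ≤ ((lam - M + N) * w p) * ((𝕄 i + D i) - (𝕄 p + D p)) := by
          rw [hsp', hsi''] at hsp
          rw [hγdef] at hγ
          exact mul_nonneg (mul_pos hγ (hwpos p)).le (sub_nonneg.2 hsp)
        rw [hsi''] at hBd
        nlinarith [hBd, hA1, hA3]
    have hexp : (lam - D p) * (w p * t p) = lam * (w p * t p) - D p * (w p * t p) := by ring
    linarith [hcore]
  -- conclude from key via epsilon argument
  rw [hTeq]
  have hΔ0 : 0 ≤ (𝕄 i + D i - M + N) ^ 2 + 4 * N * T := by
    nlinarith [sq_nonneg (𝕄 i + D i - M + N), mul_nonneg hN0.le hT0]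
  set R : ℝ := Real.sqrt ((𝕄 i + D i - M + N) ^ 2 + 4 * N * T) with hR
  have hsq : R ^ 2 = (𝕄 i + D i - M + N) ^ 2 + 4 * N * T := Real.sq_sqrt hΔ0
  have habs : |𝕄 i + D i - M + N| ≤ R := by
    have h1 : Real.sqrt ((𝕄 i + D i - M + N) ^ 2) ≤ R := by
      rw [hR]
      exact Real.sqrt_le_sqrt (by nlinarith [mul_nonneg hN0.le hT0])
    rwa [Real.sqrt_sq_eq_abs] at h1
  have hsi' : s i = 𝕄 i + D i := by rw [hs]
  have h6 := neg_abs_le (𝕄 i + D i - M + N)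
  have h7 := le_abs_self (𝕄 i + D i - M + N)
  have h5 : 𝕄 i + D i ≤ (𝕄 i + D i + M - N + R) / 2 := by linarith
  have h8 : M - N ≤ (𝕄 i + D i + M - N + R) / 2 := by linarith
  have hprod : ((𝕄 i + D i + M - N + R) / 2 - M + N) * ((𝕄 i + D i + M - N + R) / 2
      - (𝕄 i + D i)) = N * T := by
    linear_combination hsq / 4
  refine le_of_forall_pos_le_add ?_
  intro ε hε
  have hkey := key ((𝕄 i + D i + M - N + R) / 2 + ε) (by rw [hsi']; linarith)
    (by linarith) ?_
  · linarith [hkey]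
  · rw [hsi']
    nlinarith [hprod, mul_nonneg hε.le (by linarith : (0:ℝ) ≤ (𝕄 i + D i + M - N + R) / 2
        - (𝕄 i + D i)),
      mul_nonneg hε.le (by linarith : (0:ℝ) ≤ (𝕄 i + D i + M - N + R) / 2 - M + N),
      mul_pos hε hε]
end

section
/- Let G be a connected graph on n ≥ 2 vertices. For real α, with S = min_i 𝔻_i, T = min_{i≠j} d_{ij}𝔻_jᵅ/𝔻_iᵅ, and (^α 𝕄)_i + 𝔻_i ordered nonincreasingly, one has: ρ(𝔻ℚ(G)) ≥ ((^α 𝕄)_n + 𝔻_n + S − T + √(((^α 𝕄)_n + 𝔻_n − S + T)² + 4T·Σ_{k=1}^{n−1}((^α 𝕄)_k + 𝔻_k − (^α 𝕄)_n − 𝔻_n)))/2. -/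
open Matrix Finset Real

private lemma le_foldr_max (s : Multiset ℝ) (b a : ℝ) (h : a ∈ s) : a ≤ s.foldr max b := by
  induction s using Multiset.induction_on with
  | empty => simp at h
  | cons c t ih =>
    rw [Multiset.foldr_cons]
    rcases Multiset.mem_cons.mp h with rfl | h
    · exact le_max_left _ _
    · exact le_trans (ih h) (le_max_right _ _)

private lemma charpoly_eval' {n : ℕ} (A : Matrix (Fin n) (Fin n) ℝ) (r : ℝ) :
    A.charpoly.eval r = (r • (1 : Matrix (Fin n) (Fin n) ℝ) - A).det := by
  have : A.charpoly.eval r = (Polynomial.evalRingHom r) (Matrix.charmatrix A).det := rfl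
  rw [this, RingHom.map_det]
  congr 1
  ext i j
  by_cases hij : i = j
  · subst hij
    simp [Matrix.charmatrix_apply_eq, Matrix.one_apply]
  · simp [Matrix.charmatrix_apply_ne _ _ _ hij, Matrix.one_apply, hij]

private lemma le_specRad {n : ℕ} (A : Matrix (Fin n) (Fin n) ℝ) {l : ℝ}
    (hdet : (l • (1 : Matrix (Fin n) (Fin n) ℝ) - A).det = 0) : l ≤ specRad A := by
  have hne : (A.map (Complex.ofReal)).charpoly ≠ 0 := (Matrix.charpoly_monic _).ne_zero
  have hmap : A.map (Complex.ofReal) = A.map (Complex.ofRealHom : ℝ →+* ℂ) := rfl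
  have hroot : (l : ℂ) ∈ (A.map (Complex.ofReal)).charpoly.roots := by
    refine Polynomial.mem_roots'.mpr ⟨hne, ?_⟩
    show Polynomial.eval _ _ = 0
    rw [hmap, Matrix.charpoly_map]
    have : ((l : ℂ)) = Complex.ofRealHom l := rfl
    rw [this, Polynomial.eval_map, Polynomial.eval₂_hom, charpoly_eval', hdet]
    simp
  have : ‖(l : ℂ)‖ ∈ (((A.map (Complex.ofReal)).charpoly.roots).map
      (fun z => ‖z‖)) := Multiset.mem_map_of_mem _ hroot
  calc l ≤ |l| := le_abs_self l
    _ = ‖(l : ℂ)‖ := (Complex.norm_real l).symm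
    _ ≤ _ := le_foldr_max _ _ _ this

private lemma rayleigh_le {n : ℕ} {A : Matrix (Fin n) (Fin n) ℝ} (hA : A.IsHermitian)
    {l : ℝ} (hl : ∀ i, hA.eigenvalues i ≤ l) (x : Fin n → ℝ) :
    x ⬝ᵥ (A *ᵥ x) ≤ l * (x ⬝ᵥ x) := by
  classical
  set b := hA.eigenvectorBasis with hb
  set c : Fin n → ℝ := fun i => b.repr (WithLp.toLp 2 x) i with hc
  have horth : ∀ i j : Fin n, (b i : Fin n → ℝ) ⬝ᵥ (b j : Fin n → ℝ)
      = if i = j then 1 else 0 := by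
    intro i j
    have h2 := (orthonormal_iff_ite (𝕜 := ℝ)).mp b.orthonormal i j
    rw [EuclideanSpace.inner_eq_star_dotProduct] at h2
    rw [dotProduct_comm]
    simpa using h2
  have hx : x = ∑ i, c i • (b i : Fin n → ℝ) := by
    have h0 := b.sum_repr (WithLp.toLp 2 x)
    have h1 := congrArg (WithLp.ofLp (p := 2)) h0
    simp only [WithLp.ofLp_sum, WithLp.ofLp_smul] at h1
    exact h1.symm
  have hAx : A *ᵥ x = ∑ i, (hA.eigenvalues i * c i) • (b i : Fin n → ℝ) := by
    conv_lhs => rw [hx]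
    rw [show A *ᵥ (∑ i, c i • (b i : Fin n → ℝ))
        = A.mulVecLin (∑ i, c i • (b i : Fin n → ℝ)) from rfl, map_sum]
    refine Finset.sum_congr rfl fun i _ => ?_
    rw [_root_.map_smul, Matrix.mulVecLin_apply,
      show A *ᵥ (b i : Fin n → ℝ) = hA.eigenvalues i • (b i : Fin n → ℝ) from
        hA.mulVec_eigenvectorBasis i,
      smul_smul, mul_comm]
  have key : ∀ d : Fin n → ℝ,
      (∑ i, c i • (b i : Fin n → ℝ)) ⬝ᵥ (∑ j, d j • (b j : Fin n → ℝ)) = ∑ i, c i * d i := by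
    intro d
    have hexp : (∑ i, c i • (b i : Fin n → ℝ)) ⬝ᵥ (∑ j, d j • (b j : Fin n → ℝ))
        = ∑ i, ∑ j, (c j * d i) * ((b j : Fin n → ℝ) ⬝ᵥ (b i : Fin n → ℝ)) := by
      simp only [dotProduct, Finset.sum_apply, Pi.smul_apply, PiLp.smul_apply, smul_eq_mul,
        Finset.sum_mul, Finset.mul_sum]
      rw [Finset.sum_comm]
      refine Finset.sum_congr rfl fun i _ => ?_
      rw [Finset.sum_comm]
      exact Finset.sum_congr rfl fun j _ => Finset.sum_congr rfl fun k _ => by ring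
    rw [hexp]
    simp [horth, mul_ite, Finset.sum_ite_eq]
  have h1 : x ⬝ᵥ (A *ᵥ x) = ∑ i, hA.eigenvalues i * (c i * c i) := by
    rw [hAx]
    conv_lhs => rw [hx]
    rw [key (fun i => hA.eigenvalues i * c i)]
    exact Finset.sum_congr rfl fun i _ => by ring
  have h2 : x ⬝ᵥ x = ∑ i, c i * c i := by
    conv_lhs => rw [hx]
    exact key c
  rw [h1, h2, Finset.mul_sum]
  exact Finset.sum_le_sum fun i _ =>
    mul_le_mul_of_nonneg_right (hl i) (mul_self_nonneg (c i))

private lemma exists_nonneg_eigen {n : ℕ} (hn : 0 < n) {A : Matrix (Fin n) (Fin n) ℝ}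
    (hA : A.IsHermitian) (hnn : ∀ i j, 0 ≤ A i j) :
    ∃ (l : ℝ) (z : Fin n → ℝ), A *ᵥ z = l • z ∧ (∀ i, 0 ≤ z i) ∧ z ≠ 0 ∧
      (l • (1 : Matrix (Fin n) (Fin n) ℝ) - A).det = 0 := by
  classical
  obtain ⟨i₀, -, hmax⟩ := Finset.exists_max_image Finset.univ hA.eigenvalues
    ⟨⟨0, hn⟩, Finset.mem_univ _⟩
  set l := hA.eigenvalues i₀ with hldef
  have hl' : ∀ i, hA.eigenvalues i ≤ l := fun i => hmax i (Finset.mem_univ i)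
  set v : Fin n → ℝ := (hA.eigenvectorBasis i₀ : Fin n → ℝ) with hv
  have hAv : A *ᵥ v = l • v := hA.mulVec_eigenvectorBasis i₀
  have hvne : v ≠ 0 := by
    intro h
    exact hA.eigenvectorBasis.orthonormal.ne_zero i₀ (by ext k; exact congrFun h k)
  set z : Fin n → ℝ := fun i => |v i| with hzdef
  have hznn : ∀ i, 0 ≤ z i := fun i => abs_nonneg _
  have hzne : z ≠ 0 := by
    intro h
    apply hvne
    funext k
    have := congrFun h k
    simpa [hzdef, abs_eq_zero] using this
  have hzdot : z ⬝ᵥ z = v ⬝ᵥ v := by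
    simp only [dotProduct, hzdef, abs_mul_abs_self]
  have hvAv : v ⬝ᵥ (A *ᵥ v) = l * (v ⬝ᵥ v) := by
    rw [hAv, dotProduct_smul, smul_eq_mul]
  have hAzdot : v ⬝ᵥ (A *ᵥ v) ≤ z ⬝ᵥ (A *ᵥ z) := by
    simp only [dotProduct, Matrix.mulVec, Finset.mul_sum]
    refine Finset.sum_le_sum fun i _ => Finset.sum_le_sum fun j _ => ?_
    have h1 : v i * v j ≤ |v i| * |v j| := by
      calc v i * v j ≤ |v i * v j| := le_abs_self _
        _ = |v i| * |v j| := abs_mul _ _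
    calc v i * (A i j * v j) = A i j * (v i * v j) := by ring
      _ ≤ A i j * (|v i| * |v j|) := mul_le_mul_of_nonneg_left h1 (hnn i j)
      _ = z i * (A i j * z j) := by rw [hzdef]; ring
  -- the shifted matrix is PSD
  have hMherm : (l • (1 : Matrix (Fin n) (Fin n) ℝ) - A).IsHermitian := by
    show (l • (1 : Matrix (Fin n) (Fin n) ℝ) - A)ᴴ = l • 1 - A
    rw [Matrix.conjTranspose_sub, Matrix.conjTranspose_smul, Matrix.conjTranspose_one, hA]
    simp
  have hquad : ∀ x : Fin n → ℝ, x ⬝ᵥ ((l • (1 : Matrix (Fin n) (Fin n) ℝ) - A) *ᵥ x)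
      = l * (x ⬝ᵥ x) - x ⬝ᵥ (A *ᵥ x) := by
    intro x
    rw [Matrix.sub_mulVec, dotProduct_sub, Matrix.smul_mulVec,
      Matrix.one_mulVec, dotProduct_smul, smul_eq_mul]
  have hpsd : (l • (1 : Matrix (Fin n) (Fin n) ℝ) - A).PosSemidef := by
    refine Matrix.PosSemidef.of_dotProduct_mulVec_nonneg hMherm fun x => ?_
    rw [show (star x : Fin n → ℝ) = x from rfl, hquad x]
    have := rayleigh_le hA hl' x
    linarith
  have hMz : (l • (1 : Matrix (Fin n) (Fin n) ℝ) - A) *ᵥ z = 0 := by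
    rw [← (hpsd.dotProduct_mulVec_zero_iff z)]
    rw [show (star z : Fin n → ℝ) = z from rfl, hquad z]
    have h1 : z ⬝ᵥ (A *ᵥ z) ≤ l * (z ⬝ᵥ z) := rayleigh_le hA hl' z
    have h2 : l * (z ⬝ᵥ z) - z ⬝ᵥ (A *ᵥ z) ≤ 0 := by
      rw [hzdot]
      calc l * (v ⬝ᵥ v) - z ⬝ᵥ (A *ᵥ z) ≤ l * (v ⬝ᵥ v) - v ⬝ᵥ (A *ᵥ v) := by linarith
        _ = 0 := by rw [hvAv]; ring
    linarith
  have hAz : A *ᵥ z = l • z := by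
    have := hMz
    rw [Matrix.sub_mulVec, Matrix.smul_mulVec, Matrix.one_mulVec, sub_eq_zero] at this
    exact this.symm
  refine ⟨l, z, hAz, hznn, hzne, ?_⟩
  rw [← Matrix.exists_mulVec_eq_zero_iff]
  exact ⟨z, hzne, hMz⟩

theorem stmt_19 {n : ℕ} (hn : 2 ≤ n) (G : SimpleGraph (Fin n)) (hconn : G.Connected)
    (α : ℝ) (D : Fin n → ℝ) (hD : ∀ i, D i = ∑ j, (G.dist i j : ℝ))
    (𝕄 : Fin n → ℝ)
    (h𝕄 : ∀ i, 𝕄 i = (∑ j, (G.dist i j : ℝ) * (D j) ^ α) / (D i) ^ α)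
    (hord : ∀ i j : Fin n, i ≤ j → 𝕄 j + D j ≤ 𝕄 i + D i)
    (S : ℝ) (hS : IsLeast {x | ∃ i, x = D i} S)
    (T : ℝ)
    (hT : IsLeast {x | ∃ i j : Fin n, i ≠ j ∧ x = (G.dist i j : ℝ) * (D j) ^ α / (D i) ^ α} T) :
    specRad (Matrix.diagonal D + Matrix.of fun i j : Fin n => (G.dist i j : ℝ)) ≥
      (𝕄 ⟨n - 1, by omega⟩ + D ⟨n - 1, by omega⟩ + S - T +
        Real.sqrt ((𝕄 ⟨n - 1, by omega⟩ + D ⟨n - 1, by omega⟩ - S + T) ^ 2 +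
          4 * T * ∑ k ∈ Finset.Iio (⟨n - 1, by omega⟩ : Fin n),
            (𝕄 k + D k - 𝕄 ⟨n - 1, by omega⟩ - D ⟨n - 1, by omega⟩))) / 2 := by
  classical
  set last : Fin n := ⟨n - 1, by omega⟩ with hlast
  set A : Matrix (Fin n) (Fin n) ℝ :=
    Matrix.diagonal D + Matrix.of (fun i j : Fin n => (G.dist i j : ℝ)) with hAdef
  -- basic positivity facts
  have hdnn : ∀ i j : Fin n, (0 : ℝ) ≤ (G.dist i j : ℝ) := fun i j => Nat.cast_nonneg _
  have hdpos : ∀ i j : Fin n, i ≠ j → (0 : ℝ) < (G.dist i j : ℝ) := by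
    intro i j hij
    exact_mod_cast hconn.pos_dist_of_ne hij
  have hdself : ∀ i : Fin n, (G.dist i i : ℝ) = 0 := by
    intro i; simp
  have hdsymm : ∀ i j : Fin n, (G.dist i j : ℝ) = (G.dist j i : ℝ) := by
    intro i j; rw [SimpleGraph.dist_comm]
  have hDpos : ∀ i, 0 < D i := by
    intro i
    rw [hD i]
    have hj : ∃ j : Fin n, j ≠ i := by
      refine ⟨⟨if i.val = 0 then 1 else 0, by split <;> omega⟩, ?_⟩
      intro hc
      rw [Fin.ext_iff] at hc
      simp only at hc
      split at hc <;> omega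
    obtain ⟨j, hj⟩ := hj
    refine Finset.sum_pos' (fun k _ => hdnn i k) ⟨j, Finset.mem_univ j, hdpos i j hj.symm⟩
  set y : Fin n → ℝ := fun i => (D i) ^ α with hy
  have hypos : ∀ i, 0 < y i := fun i => Real.rpow_pos_of_pos (hDpos i) α
  -- S and T facts
  have hSle : ∀ i, S ≤ D i := fun i => hS.2 ⟨i, rfl⟩
  have hSpos : 0 < S := by
    obtain ⟨iS, hiS⟩ := hS.1
    rw [hiS]; exact hDpos iS
  have hTle : ∀ i j : Fin n, i ≠ j → T ≤ (G.dist i j : ℝ) * y j / y i :=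
    fun i j h => hT.2 ⟨i, j, h, rfl⟩
  have hTpos : 0 < T := by
    obtain ⟨i₁, j₁, hne₁, hTeq⟩ := hT.1
    rw [hTeq]
    exact div_pos (mul_pos (hdpos i₁ j₁ hne₁) (hypos j₁)) (hypos i₁)
  -- the matrix is symmetric with nonnegative entries
  have hAherm : A.IsHermitian := by
    show Aᴴ = A
    ext i j
    simp only [hAdef, Matrix.conjTranspose_apply, Matrix.add_apply, Matrix.diagonal_apply,
      Matrix.of_apply, star_trivial]
    rw [hdsymm j i]
    by_cases h : i = j
    · subst h; simp
    · simp [h, Ne.symm h]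
  have hAnn : ∀ i j, 0 ≤ A i j := by
    intro i j
    simp only [hAdef, Matrix.add_apply, Matrix.diagonal_apply, Matrix.of_apply]
    by_cases h : i = j
    · subst h
      have hnn2 : (0:ℝ) ≤ D i + (G.dist i i : ℝ) := add_nonneg (le_of_lt (hDpos i)) (hdnn i i)
      simpa using hnn2
    · simp [h, hdnn]
  obtain ⟨l, z, hAz, hznn, hzne, hdet⟩ := exists_nonneg_eigen (by omega) hAherm hAnn
  -- row equations
  have hrow : ∀ i, l * z i = D i * z i + ∑ j, (G.dist i j : ℝ) * z j := by
    intro i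
    have h := congrFun hAz i
    simp only [hAdef, Matrix.mulVec, dotProduct, Matrix.add_apply, Matrix.diagonal_apply,
      Matrix.of_apply, Pi.smul_apply, smul_eq_mul, add_mul, Finset.sum_add_distrib, ite_mul,
      zero_mul, Finset.sum_ite_eq, Finset.mem_univ, if_true] at h
    exact h.symm.trans (by ring)
  -- strict positivity of z
  have hzpos : ∀ i, 0 < z i := by
    intro i
    rcases (hznn i).lt_or_eq with h | h
    · exact h
    exfalso
    apply hzne
    have h0 : ∑ j, (G.dist i j : ℝ) * z j = 0 := by
      have := hrow i
      rw [← h] at this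
      linarith
    have hall : ∀ j ∈ Finset.univ, (G.dist i j : ℝ) * z j = 0 := by
      rw [← Finset.sum_eq_zero_iff_of_nonneg (fun j _ => mul_nonneg (hdnn i j) (hznn j))]
      exact h0
    funext j
    show z j = (0 : ℝ)
    by_cases hij : i = j
    · rw [← hij]; exact h.symm
    · have hj0 := hall j (Finset.mem_univ j)
      have hd := hdpos i j hij
      rcases mul_eq_zero.mp hj0 with h' | h'
      · exact absurd h' (ne_of_gt hd)
      · exact h'
  set u : Fin n → ℝ := fun i => y i * z i with hu
  have hupos : ∀ i, 0 < u i := fun i => mul_pos (hypos i) (hzpos i)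
  obtain ⟨m, -, hm⟩ := Finset.exists_min_image Finset.univ u ⟨⟨0, by omega⟩, Finset.mem_univ _⟩
  have hmle : ∀ j, u m ≤ u j := fun j => hm j (Finset.mem_univ j)
  set U : ℝ := ∑ j, u j with hU
  have hUpos : 0 < U := Finset.sum_pos (fun j _ => hupos j) ⟨⟨0, by omega⟩, Finset.mem_univ _⟩
  -- inequality (*)
  have hcoef : y m * ∑ j, (G.dist m j : ℝ) * z j
      = ∑ j, ((G.dist j m : ℝ) * y m / y j) * u j := by
    rw [Finset.mul_sum]
    refine Finset.sum_congr rfl fun j _ => ?_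
    have hyj := (hypos j).ne'
    rw [hdsymm m j]
    field_simp [hu]
    ring
  have hstar1 : T * U ≤ (l - S + T) * u m := by
    have hsumge : T * U - T * u m ≤ ∑ j, ((G.dist j m : ℝ) * y m / y j) * u j := by
      have hsplit : ∑ j, ((G.dist j m : ℝ) * y m / y j) * u j
          = ((G.dist m m : ℝ) * y m / y m) * u m
            + ∑ j ∈ Finset.univ.erase m, ((G.dist j m : ℝ) * y m / y j) * u j := by
        exact (Finset.add_sum_erase _ _ (Finset.mem_univ m)).symm
      have hzero : ((G.dist m m : ℝ) * y m / y m) * u m = 0 := by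
        rw [hdself m]; ring
      have hbound : ∑ j ∈ Finset.univ.erase m, T * u j
          ≤ ∑ j ∈ Finset.univ.erase m, ((G.dist j m : ℝ) * y m / y j) * u j := by
        refine Finset.sum_le_sum fun j hj => ?_
        have hjm : j ≠ m := (Finset.mem_erase.mp hj).1
        exact mul_le_mul_of_nonneg_right (hTle j m hjm) (le_of_lt (hupos j))
      have herase : ∑ j ∈ Finset.univ.erase m, T * u j = T * U - T * u m := by
        have h6 := Finset.add_sum_erase Finset.univ (fun j => T * u j) (Finset.mem_univ m)
        rw [hU, Finset.mul_sum]
        linarith [h6]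
      rw [hsplit, hzero, zero_add, ← herase]
      exact hbound
    have hrowm := hrow m
    have hym := hypos m
    -- multiply row m by y m
    have : l * u m = D m * u m + y m * ∑ j, (G.dist m j : ℝ) * z j := by
      simp only [hu]
      linear_combination y m * hrowm
    rw [hcoef] at this
    have hDm : S ≤ D m := hSle m
    have humpos := hupos m
    nlinarith [hsumge, this]
  -- inequality (**)
  set r : Fin n → ℝ := fun i => 𝕄 i + D i with hr
  have hswap : ∑ i, y i * ∑ j, (G.dist i j : ℝ) * z j
      = ∑ i, z i * ∑ j, (G.dist i j : ℝ) * y j := by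
    have h1 : ∑ i, y i * ∑ j, (G.dist i j : ℝ) * z j
        = ∑ i, ∑ j, (G.dist i j : ℝ) * y i * z j := by
      refine Finset.sum_congr rfl fun i _ => ?_
      rw [Finset.mul_sum]
      exact Finset.sum_congr rfl fun j _ => by ring
    have h2 : ∑ i, z i * ∑ j, (G.dist i j : ℝ) * y j
        = ∑ j, ∑ i, (G.dist i j : ℝ) * y i * z j := by
      refine Finset.sum_congr rfl fun j _ => ?_
      rw [Finset.mul_sum]
      refine Finset.sum_congr rfl fun i _ => ?_
      rw [hdsymm j i]
      ring
    rw [h1, h2, Finset.sum_comm]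
  have hMu : ∀ i, 𝕄 i * u i = (∑ j, (G.dist i j : ℝ) * y j) * z i := by
    intro i
    rw [h𝕄 i, hu]
    have hyi := (hypos i).ne'
    simp only [hy] at hyi ⊢
    field_simp
  have hsum_l : l * U = ∑ i, r i * u i := by
    have h1 : ∀ i, l * u i = D i * u i + y i * ∑ j, (G.dist i j : ℝ) * z j := by
      intro i
      simp only [hu]
      linear_combination y i * hrow i
    calc l * U = ∑ i, l * u i := by rw [hU, Finset.mul_sum]
      _ = ∑ i, (D i * u i + y i * ∑ j, (G.dist i j : ℝ) * z j) :=
          Finset.sum_congr rfl fun i _ => h1 i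
      _ = ∑ i, D i * u i + ∑ i, y i * ∑ j, (G.dist i j : ℝ) * z j := Finset.sum_add_distrib
      _ = ∑ i, D i * u i + ∑ i, z i * ∑ j, (G.dist i j : ℝ) * y j := by rw [hswap]
      _ = ∑ i, D i * u i + ∑ i, 𝕄 i * u i := by
          congr 1
          exact Finset.sum_congr rfl fun i _ => by rw [hMu i]; ring
      _ = ∑ i, r i * u i := by
          rw [← Finset.sum_add_distrib]
          exact Finset.sum_congr rfl fun i _ => by rw [hr]; ring
  have hlelast : ∀ i : Fin n, i ≤ last := by
    intro i
    rw [Fin.le_def]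
    have := i.isLt
    simp only [hlast]
    omega
  have hrlast : ∀ i, r last ≤ r i := fun i => hord i last (hlelast i)
  set Sig : ℝ := ∑ i, (r i - r last) with hSig
  have hSignn : 0 ≤ Sig := Finset.sum_nonneg fun i _ => sub_nonneg.mpr (hrlast i)
  have hstar2 : r last * U + Sig * u m ≤ l * U := by
    rw [hsum_l]
    have : ∀ i ∈ Finset.univ, r last * u i + (r i - r last) * u m ≤ r i * u i := by
      intro i _
      have h1 : (r i - r last) * u m ≤ (r i - r last) * u i :=
        mul_le_mul_of_nonneg_left (hmle i) (sub_nonneg.mpr (hrlast i))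
      nlinarith [h1]
    have := Finset.sum_le_sum this
    rw [Finset.sum_add_distrib] at this
    calc r last * U + Sig * u m
        = ∑ i, r last * u i + ∑ i, (r i - r last) * u m := by
          rw [hU, hSig, Finset.mul_sum, Finset.sum_mul]
      _ ≤ ∑ i, r i * u i := this
  -- combine
  set a : ℝ := r last with ha
  have hla : a ≤ l := by
    have h1 : a * U ≤ l * U := by nlinarith [hstar2, mul_nonneg hSignn (le_of_lt (hupos m))]
    exact le_of_mul_le_mul_right h1 hUpos
  have hlST : 0 < l - S + T := by
    by_contra h
    push_neg at h
    have h1 : (l - S + T) * u m ≤ 0 := mul_nonpos_of_nonpos_of_nonneg h (le_of_lt (hupos m))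
    have h2 : 0 < T * U := mul_pos hTpos hUpos
    linarith [hstar1]
  have hkey : T * Sig ≤ (l - a) * (l - S + T) := by
    have h4 : (T * U) * (Sig * u m) ≤ ((l - S + T) * u m) * ((l - a) * U) := by
      refine mul_le_mul hstar1 ?_ (mul_nonneg hSignn (le_of_lt (hupos m)))
        (le_of_lt (mul_pos hlST (hupos m)))
      nlinarith [hstar2]
    have h5 : (T * Sig) * (U * u m) ≤ ((l - a) * (l - S + T)) * (U * u m) := by nlinarith [h4]
    exact le_of_mul_le_mul_right h5 (mul_pos hUpos (hupos m))
  -- identify the sum in the statement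
  have hIio : ∑ k ∈ Finset.Iio last, (𝕄 k + D k - 𝕄 last - D last) = Sig := by
    have herase : Finset.univ.erase last = Finset.Iio last := by
      ext k
      have hk := k.isLt
      simp only [Finset.mem_erase, Finset.mem_univ, and_true, Finset.mem_Iio, Ne,
        Fin.ext_iff, Fin.lt_def, hlast]
      omega
    have h7 := Finset.add_sum_erase Finset.univ (fun i => r i - r last) (Finset.mem_univ last)
    rw [herase] at h7
    rw [hSig, ← h7, sub_self, zero_add]
    refine Finset.sum_congr rfl fun k _ => ?_
    simp only [hr]; ring
  have h𝕄nn : 0 ≤ 𝕄 last := by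
    rw [h𝕄 last]
    refine div_nonneg (Finset.sum_nonneg fun j _ => mul_nonneg (hdnn last j) ?_) ?_
    · exact le_of_lt (hypos j)
    · exact le_of_lt (hypos last)
  have haST : 0 ≤ a - S + T := by
    have : S ≤ D last := hSle last
    simp only [ha, hr]
    linarith [h𝕄nn, hTpos]
  have hsqrt : Real.sqrt ((a - S + T) ^ 2 + 4 * T * Sig) ≤ 2 * l - a - S + T := by
    have hg : 0 ≤ 2 * l - a - S + T := by linarith
    have hE : (a - S + T) ^ 2 + 4 * T * Sig ≤ (2 * l - a - S + T) ^ 2 := by nlinarith [hkey]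
    calc Real.sqrt ((a - S + T) ^ 2 + 4 * T * Sig)
        ≤ Real.sqrt ((2 * l - a - S + T) ^ 2) := Real.sqrt_le_sqrt hE
      _ = 2 * l - a - S + T := Real.sqrt_sq hg
  have hlspec : l ≤ specRad A := le_specRad A hdet
  have hfin : (𝕄 last + D last + S - T +
      Real.sqrt ((𝕄 last + D last - S + T) ^ 2 + 4 * T *
        ∑ k ∈ Finset.Iio last, (𝕄 k + D k - 𝕄 last - D last))) / 2 ≤ l := by
    rw [hIio]
    have h1 : 𝕄 last + D last = a := by simp only [ha, hr]
    rw [show 𝕄 last + D last - S + T = a - S + T by rw [← h1],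
      show 𝕄 last + D last + S - T = a + S - T by rw [← h1]]
    linarith [hsqrt]
  exact le_trans hfin hlspec
end
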